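/- Let M = M(Σ,I) be a free partially commutative monoid and suppose x, y ∈ Σ are two distinct letters with (x,y) ∉ I. Set Σ_0 = Σ \ {x,y}, Σ_1 = Σ \ {x}, Σ_2 = Σ \ {y}, I_j = (Σ_j×Σ_j) ∩ I, and M_j = M(Σ_j,I_j) for j = 0, 1, 2, regarded as submonoids of M. Then M, together with the inclusions of M_1 and M_2, is the free product of M_1 and M_2 amalgamated over M_0; that is, M is the pushout of the inclusions M_0 → M_1 and M_0 → M_2 in the category of monoids. -/

import Mathlib

open scoped Classical

/-- The elementary commutation relation on words: `ab ~ ba` for `(a,b) ∈ I`. -/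
def TraceRel {α : Type*} (I : α → α → Prop) : FreeMonoid α → FreeMonoid α → Prop :=
  fun u v => ∃ a b, I a b ∧ u = FreeMonoid.of a * FreeMonoid.of b ∧
    v = FreeMonoid.of b * FreeMonoid.of a

/-- The congruence on the free monoid generated by the commutation relation. -/
def TraceCon {α : Type*} (I : α → α → Prop) : Con (FreeMonoid α) := conGen (TraceRel I)

/-- The free partially commutative monoid `M(Σ, I)`: the monoid presented by
generators `Σ` and relations `ab = ba` for `(a,b) ∈ I`. -/
abbrev TraceMonoid (α : Type*) (I : α → α → Prop) : Type _ := (TraceCon I).Quotient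

/-- The canonical map `Σ* → M(Σ, I)` sending a word to its class. -/
def TraceMonoid.mk {α : Type*} (I : α → α → Prop) : FreeMonoid α →* TraceMonoid α I :=
  Con.mk' _

/-- The projection `π_A : M(Σ, I) → M(A, I_A)` erasing all letters not in `A`. -/
noncomputable def TraceMonoid.proj {α : Type*} (I : α → α → Prop) (A : Set α) :
    TraceMonoid α I →* TraceMonoid A (fun a b => I a.1 b.1) :=
  Con.lift _ ((TraceMonoid.mk _).comp (FreeMonoid.lift fun c =>
    if h : c ∈ A then FreeMonoid.of (⟨c, h⟩ : A) else 1)) <| by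
    refine Con.conGen_le.mpr ?_
    rintro u v ⟨a, b, hI, rfl, rfl⟩
    simp only [Con.ker_rel, map_mul, MonoidHom.comp_apply, FreeMonoid.lift_eval_of]
    by_cases ha : a ∈ A <;> by_cases hb : b ∈ A <;>
      simp only [ha, hb, dif_pos, dif_neg, not_false_iff, map_one, one_mul, mul_one]
    rw [← map_mul, ← map_mul]
    exact Quotient.sound (ConGen.Rel.of _ _ ⟨⟨a, ha⟩, ⟨b, hb⟩, hI, rfl, rfl⟩)

/-- The monoid homomorphism `M(A, I_A) → M(Σ, I)` induced by an inclusion `A ⊆ Σ`,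
sending the class of a word `x ∈ A*` to its class in `M(Σ, I)`. -/
def TraceMonoid.embed {σ : Type*} (I : σ → σ → Prop) (A : Set σ) :
    TraceMonoid A (fun a b => I a.1 b.1) →* TraceMonoid σ I :=
  Con.lift _ ((TraceMonoid.mk I).comp (FreeMonoid.map Subtype.val)) <| by
    refine Con.conGen_le.mpr ?_
    rintro u v ⟨a, b, hI, rfl, rfl⟩
    simp only [Con.ker_rel, MonoidHom.comp_apply, map_mul, FreeMonoid.map_of]
    rw [← map_mul, ← map_mul]
    exact Quotient.sound (ConGen.Rel.of _ _ ⟨a.1, b.1, hI, rfl, rfl⟩)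

/-- The homomorphism `M(A, I_A) → M(B, I_B)` induced by an inclusion `A ⊆ B` of
subsets of `Σ`. -/
def TraceMonoid.include {σ : Type*} (I : σ → σ → Prop) {A B : Set σ} (h : A ⊆ B) :
    TraceMonoid A (fun a b => I a.1 b.1) →* TraceMonoid B (fun a b => I a.1 b.1) :=
  Con.lift _ ((TraceMonoid.mk _).comp (FreeMonoid.map (Set.inclusion h))) <| by
    refine Con.conGen_le.mpr ?_
    rintro u v ⟨a, b, hI, rfl, rfl⟩
    simp only [Con.ker_rel, MonoidHom.comp_apply, map_mul, FreeMonoid.map_of]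
    rw [← map_mul, ← map_mul]
    exact Quotient.sound (ConGen.Rel.of _ _ ⟨_, _, hI, rfl, rfl⟩)

/-- Two homomorphisms out of a trace monoid agree if they agree on generators. -/
theorem TraceMonoid.hom_ext' {α : Type*} {I : α → α → Prop} {N : Type*} [Monoid N]
    {f g : TraceMonoid α I →* N}
    (h : ∀ a, f (TraceMonoid.mk I (FreeMonoid.of a)) = g (TraceMonoid.mk I (FreeMonoid.of a))) :
    f = g := by
  have h2 : f.comp (TraceMonoid.mk I) = g.comp (TraceMonoid.mk I) := FreeMonoid.hom_eq h
  refine DFunLike.ext _ _ fun z => ?_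
  obtain ⟨w, rfl⟩ := Con.mk'_surjective z
  exact DFunLike.congr_fun h2 w

theorem TraceMonoid.mk_comm {α : Type*} {I : α → α → Prop} {a b : α} (h : I a b) :
    TraceMonoid.mk I (FreeMonoid.of a * FreeMonoid.of b) =
      TraceMonoid.mk I (FreeMonoid.of b * FreeMonoid.of a) :=
  Quotient.sound (ConGen.Rel.of _ _ ⟨a, b, h, rfl, rfl⟩)

/-- If `x ≠ y` are non-commuting letters, `Σ₀ = Σ \ {x,y}`, `Σ₁ = Σ \ {x}`,
`Σ₂ = Σ \ {y}`, then `M(Σ,I)`, with the inclusions of `M₁ = M(Σ₁,I₁)` and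
`M₂ = M(Σ₂,I₂)`, is the free product of `M₁` and `M₂` amalgamated over
`M₀ = M(Σ₀,I₀)`: it satisfies the universal property of the pushout of the
inclusions `M₀ → M₁` and `M₀ → M₂` in the category of monoids. -/
theorem traceMonoid_is_amalgam {σ : Type*} [Fintype σ] (I : σ → σ → Prop)
    (hsym : Symmetric I) (hirr : Irreflexive I) (x y : σ) (hxy : x ≠ y) (hI : ¬ I x y) :
    letI S₀ : Set σ := ({x, y} : Set σ)ᶜ
    letI S₁ : Set σ := ({x} : Set σ)ᶜ
    letI S₂ : Set σ := ({y} : Set σ)ᶜ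
    letI h₀₁ : S₀ ⊆ S₁ := Set.compl_subset_compl.mpr (by simp)
    letI h₀₂ : S₀ ⊆ S₂ := Set.compl_subset_compl.mpr (by simp)
    (TraceMonoid.embed I S₁).comp (TraceMonoid.include I h₀₁) =
      (TraceMonoid.embed I S₂).comp (TraceMonoid.include I h₀₂) ∧
    ∀ (N : Type*) [Monoid N] (g₁ : TraceMonoid S₁ (fun a b => I a.1 b.1) →* N)
      (g₂ : TraceMonoid S₂ (fun a b => I a.1 b.1) →* N),
      g₁.comp (TraceMonoid.include I h₀₁) = g₂.comp (TraceMonoid.include I h₀₂) →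
      ∃! h : TraceMonoid σ I →* N,
        h.comp (TraceMonoid.embed I S₁) = g₁ ∧ h.comp (TraceMonoid.embed I S₂) = g₂ := by
  set S₀ : Set σ := ({x, y} : Set σ)ᶜ with hS₀
  set S₁ : Set σ := ({x} : Set σ)ᶜ with hS₁
  set S₂ : Set σ := ({y} : Set σ)ᶜ with hS₂
  have mem₁ : ∀ {c : σ}, c ≠ x → c ∈ S₁ := fun {c} hc => by simp [hS₁, hc]
  have mem₂ : ∀ {c : σ}, c ≠ y → c ∈ S₂ := fun {c} hc => by simp [hS₂, hc]
  refine ⟨TraceMonoid.hom_ext' fun a => rfl, ?_⟩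
  intro N _ g₁ g₂ hg
  -- `g₁` and `g₂` agree on letters distinct from both `x` and `y`
  have hg' : ∀ (c : σ) (hcx : c ≠ x) (hcy : c ≠ y),
      g₁ (TraceMonoid.mk _ (FreeMonoid.of (⟨c, mem₁ hcx⟩ : S₁))) =
      g₂ (TraceMonoid.mk _ (FreeMonoid.of (⟨c, mem₂ hcy⟩ : S₂))) := by
    intro c hcx hcy
    have hc0 : c ∈ S₀ := by simp [hS₀, hcx, hcy]
    exact DFunLike.congr_fun hg (TraceMonoid.mk _ (FreeMonoid.of (⟨c, hc0⟩ : S₀)))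
  -- the map on letters
  set f : σ → N := fun c =>
    if hcx : c = x then
      g₂ (TraceMonoid.mk _ (FreeMonoid.of (⟨c, mem₂ (hcx ▸ hxy)⟩ : S₂)))
    else
      g₁ (TraceMonoid.mk _ (FreeMonoid.of (⟨c, mem₁ hcx⟩ : S₁))) with hf
  have f₁ : ∀ (a : S₁), f a.1 = g₁ (TraceMonoid.mk _ (FreeMonoid.of a)) := by
    rintro ⟨a, ha⟩
    have hax : a ≠ x := by simpa [hS₁] using ha
    simp only [hf, dif_neg hax]
  have f₂ : ∀ (a : S₂), f a.1 = g₂ (TraceMonoid.mk _ (FreeMonoid.of a)) := by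
    rintro ⟨a, ha⟩
    have hay : a ≠ y := by simpa [hS₂] using ha
    by_cases hax : a = x
    · simp only [hf, dif_pos hax]
    · simp only [hf, dif_neg hax]
      exact hg' a hax hay
  -- the induced homomorphism
  have hker : TraceCon I ≤ Con.ker (FreeMonoid.lift f) := by
    refine Con.conGen_le.mpr ?_
    rintro u v ⟨a, b, hab, rfl, rfl⟩
    simp only [Con.ker_rel, map_mul, FreeMonoid.lift_eval_of]
    have hne : a ≠ b := fun h => hirr a (h ▸ hab)
    by_cases hax : a = x
    · have hay : a ≠ y := by rw [hax]; exact hxy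
      have hby : b ≠ y := fun h => hI (by rw [hax, h] at hab; exact hab)
      rw [f₂ ⟨a, mem₂ hay⟩, f₂ ⟨b, mem₂ hby⟩, ← map_mul, ← map_mul, ← map_mul, ← map_mul]
      exact congrArg g₂ (TraceMonoid.mk_comm hab)
    · by_cases hbx : b = x
      · have hby : b ≠ y := by rw [hbx]; exact hxy
        have hay : a ≠ y := fun h => hI (by rw [h] at hab; rw [hbx] at hab; exact hsym hab)
        rw [f₂ ⟨a, mem₂ hay⟩, f₂ ⟨b, mem₂ hby⟩, ← map_mul, ← map_mul, ← map_mul, ← map_mul]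
        exact congrArg g₂ (TraceMonoid.mk_comm hab)
      · rw [f₁ ⟨a, mem₁ hax⟩, f₁ ⟨b, mem₁ hbx⟩, ← map_mul, ← map_mul, ← map_mul, ← map_mul]
        exact congrArg g₁ (TraceMonoid.mk_comm hab)
  refine ⟨Con.lift _ (FreeMonoid.lift f) hker, ⟨?_, ?_⟩, ?_⟩
  · exact TraceMonoid.hom_ext' fun a => f₁ a
  · exact TraceMonoid.hom_ext' fun a => f₂ a
  · rintro h ⟨h1, h2⟩
    refine TraceMonoid.hom_ext' fun c => ?_
    by_cases hcx : c = x
    · subst hcx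
      have := DFunLike.congr_fun h2 (TraceMonoid.mk _ (FreeMonoid.of (⟨c, mem₂ hxy⟩ : S₂)))
      calc h (TraceMonoid.mk I (FreeMonoid.of c))
          = g₂ (TraceMonoid.mk _ (FreeMonoid.of (⟨c, mem₂ hxy⟩ : S₂))) := this
        _ = f c := (f₂ _).symm
        _ = _ := rfl
    · have := DFunLike.congr_fun h1 (TraceMonoid.mk _ (FreeMonoid.of (⟨c, mem₁ hcx⟩ : S₁)))
      calc h (TraceMonoid.mk I (FreeMonoid.of c))
          = g₁ (TraceMonoid.mk _ (FreeMonoid.of (⟨c, mem₁ hcx⟩ : S₁))) := this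
        _ = f c := (f₁ _).symm
        _ = _ := rfl
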